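/- Let L = α k² ln(4X̃₁² + Ỹ₂²/k²) with canonical Poisson structure {X̃₁, Ỹ₁} = {X̃₂, Ỹ₂} = 1, all other brackets zero, on the open set where 4X̃₁² + Ỹ₂²/k² > 0 and Ỹ₂ ≠ 0. Let Q₂ = k² e^{L/(αk²)}. Then G = sin(√(2c₀) Q₂ X̃₂ / (2αk² Ỹ₂)) satisfies X_L²(G) = -2c₀ G. -/

import Mathlib

/-- Phase space ℝ⁴ with coordinates (X̃₁, Ỹ₁, X̃₂, Ỹ₂). -/
abbrev Phase4 : Type := ℝ × ℝ × ℝ × ℝ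

/-- Hamiltonian vector field X_L f = {f, L} for the canonical bracket
{X̃₁,Ỹ₁} = {X̃₂,Ỹ₂} = 1, all other brackets zero. -/
noncomputable def XLop (L f : Phase4 → ℝ) (p : Phase4) : ℝ :=
  fderiv ℝ f p (1, 0, 0, 0) * fderiv ℝ L p (0, 1, 0, 0) -
    fderiv ℝ f p (0, 1, 0, 0) * fderiv ℝ L p (1, 0, 0, 0) +
  fderiv ℝ f p (0, 0, 1, 0) * fderiv ℝ L p (0, 0, 0, 1) -
    fderiv ℝ f p (0, 0, 0, 1) * fderiv ℝ L p (0, 0, 1, 0)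

lemma fderiv_dir {f : Phase4 → ℝ} {p w : Phase4} {d : ℝ}
    (hf : DifferentiableAt ℝ f p)
    (hd : HasDerivAt (fun t : ℝ => f (p + t • w)) d 0) :
    fderiv ℝ f p w = d := by
  rw [← hf.lineDeriv_eq_fderiv]
  simpa [lineDeriv] using hd.deriv

lemma coord2 (p : Phase4) (t : ℝ) :
    p + t • ((0:ℝ), (1:ℝ), (0:ℝ), (0:ℝ)) = (p.1, p.2.1 + t, p.2.2.1, p.2.2.2) := by
  ext <;> simp

lemma coord3 (p : Phase4) (t : ℝ) :
    p + t • ((0:ℝ), (0:ℝ), (1:ℝ), (0:ℝ)) = (p.1, p.2.1, p.2.2.1 + t, p.2.2.2) := by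
  ext <;> simp

lemma coord4 (p : Phase4) (t : ℝ) :
    p + t • ((0:ℝ), (0:ℝ), (0:ℝ), (1:ℝ)) = (p.1, p.2.1, p.2.2.1, p.2.2.2 + t) := by
  ext <;> simp

noncomputable def Lfun (α k : ℝ) : Phase4 → ℝ := fun p =>
  α * k ^ 2 * Real.log (4 * p.1 ^ 2 + p.2.2.2 ^ 2 / k ^ 2)

noncomputable def Gfun (α k c₀ : ℝ) : Phase4 → ℝ := fun p =>
  Real.sin (Real.sqrt (2 * c₀) * (k ^ 2 * Real.exp (Lfun α k p / (α * k ^ 2))) * p.2.2.1 /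
    (2 * α * k ^ 2 * p.2.2.2))

noncomputable def Hfun (α k c₀ : ℝ) : Phase4 → ℝ := fun p =>
  Real.sqrt (2 * c₀) * Real.cos (Real.sqrt (2 * c₀) *
    (k ^ 2 * (4 * p.1 ^ 2 + p.2.2.2 ^ 2 / k ^ 2)) * p.2.2.1 / (2 * α * k ^ 2 * p.2.2.2))

section derivs
variable {α k c₀ : ℝ} {q : Phase4}

lemma L_diff (hS : 0 < 4 * q.1 ^ 2 + q.2.2.2 ^ 2 / k ^ 2) :
    DifferentiableAt ℝ (Lfun α k) q := by
  have h : DifferentiableAt ℝ (fun p : Phase4 => 4 * p.1 ^ 2 + p.2.2.2 ^ 2 / k ^ 2) q := by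
    fun_prop
  exact (h.log hS.ne').const_mul _

lemma L_e2 (hS : 0 < 4 * q.1 ^ 2 + q.2.2.2 ^ 2 / k ^ 2) :
    fderiv ℝ (Lfun α k) q ((0:ℝ), (1:ℝ), (0:ℝ), (0:ℝ)) = 0 := by
  apply fderiv_dir (L_diff hS)
  have h : (fun t : ℝ => Lfun α k (q + t • ((0:ℝ),(1:ℝ),(0:ℝ),(0:ℝ)))) = fun _ => Lfun α k q := by
    funext t; simp [Lfun, coord2]
  rw [h]; exact hasDerivAt_const 0 _

lemma L_e3 (hS : 0 < 4 * q.1 ^ 2 + q.2.2.2 ^ 2 / k ^ 2) :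
    fderiv ℝ (Lfun α k) q ((0:ℝ), (0:ℝ), (1:ℝ), (0:ℝ)) = 0 := by
  apply fderiv_dir (L_diff hS)
  have h : (fun t : ℝ => Lfun α k (q + t • ((0:ℝ),(0:ℝ),(1:ℝ),(0:ℝ)))) = fun _ => Lfun α k q := by
    funext t; simp [Lfun, coord3]
  rw [h]; exact hasDerivAt_const 0 _

lemma L_e4 (hS : 0 < 4 * q.1 ^ 2 + q.2.2.2 ^ 2 / k ^ 2) :
    fderiv ℝ (Lfun α k) q ((0:ℝ), (0:ℝ), (0:ℝ), (1:ℝ)) =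
      α * k ^ 2 * ((2 * q.2.2.2 / k ^ 2) / (4 * q.1 ^ 2 + q.2.2.2 ^ 2 / k ^ 2)) := by
  apply fderiv_dir (L_diff hS)
  have h : (fun t : ℝ => Lfun α k (q + t • ((0:ℝ),(0:ℝ),(0:ℝ),(1:ℝ)))) =
      fun t => α * k ^ 2 * Real.log (4 * q.1 ^ 2 + (q.2.2.2 + t) ^ 2 / k ^ 2) := by
    funext t; simp [Lfun, coord4]
  rw [h]
  have h1 : HasDerivAt (fun t : ℝ => q.2.2.2 + t) 1 0 := by
    simpa using (hasDerivAt_id (0:ℝ)).const_add q.2.2.2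
  have h2 := (((h1.pow 2).div_const (k ^ 2)).const_add (4 * q.1 ^ 2))
  have h3 : (4 * q.1 ^ 2 + (q.2.2.2 + 0) ^ 2 / k ^ 2) ≠ 0 := by
    simpa using hS.ne'
  have h4 := (h2.log h3).const_mul (α * k ^ 2)
  exact h4.congr_deriv (by norm_num)

lemma G_diff (hα : α ≠ 0) (hk : k ≠ 0) (hS : 0 < 4 * q.1 ^ 2 + q.2.2.2 ^ 2 / k ^ 2)
    (hv : q.2.2.2 ≠ 0) : DifferentiableAt ℝ (Gfun α k c₀) q := by
  have hSd : DifferentiableAt ℝ (fun p : Phase4 => 4 * p.1 ^ 2 + p.2.2.2 ^ 2 / k ^ 2) q := by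
    fun_prop
  have hden : (fun p : Phase4 => 2 * α * k ^ 2 * p.2.2.2) q ≠ 0 := by
    show 2 * α * k ^ 2 * q.2.2.2 ≠ 0; positivity
  have hL : DifferentiableAt ℝ (Lfun α k) q := L_diff hS
  have h1 : DifferentiableAt ℝ (fun p : Phase4 => Lfun α k p / (α * k ^ 2)) q := by
    simp only [div_eq_mul_inv]
    exact hL.mul_const _
  have h2 : DifferentiableAt ℝ (fun p : Phase4 => Real.exp (Lfun α k p / (α * k ^ 2))) q :=
    h1.exp
  have h3 : DifferentiableAt ℝ (fun p : Phase4 =>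
      Real.sqrt (2 * c₀) * (k ^ 2 * Real.exp (Lfun α k p / (α * k ^ 2)))) q :=
    (h2.const_mul (k ^ 2)).const_mul (Real.sqrt (2 * c₀))
  have hu : DifferentiableAt ℝ (fun p : Phase4 => p.2.2.1) q := by fun_prop
  have hnum : DifferentiableAt ℝ (fun p : Phase4 =>
      Real.sqrt (2 * c₀) * (k ^ 2 * Real.exp (Lfun α k p / (α * k ^ 2))) * p.2.2.1) q :=
    h3.mul hu
  have hd : DifferentiableAt ℝ (fun p : Phase4 => 2 * α * k ^ 2 * p.2.2.2) q := by fun_prop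
  have hq : DifferentiableAt ℝ (fun p : Phase4 =>
      Real.sqrt (2 * c₀) * (k ^ 2 * Real.exp (Lfun α k p / (α * k ^ 2))) * p.2.2.1 /
        (2 * α * k ^ 2 * p.2.2.2)) q := by
    simp only [div_eq_mul_inv]
    exact hnum.mul (hd.inv hden)
  exact hq.sin

lemma G_e2 (hα : α ≠ 0) (hk : k ≠ 0) (hS : 0 < 4 * q.1 ^ 2 + q.2.2.2 ^ 2 / k ^ 2)
    (hv : q.2.2.2 ≠ 0) :
    fderiv ℝ (Gfun α k c₀) q ((0:ℝ), (1:ℝ), (0:ℝ), (0:ℝ)) = 0 := by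
  apply fderiv_dir (G_diff hα hk hS hv)
  have h : (fun t : ℝ => Gfun α k c₀ (q + t • ((0:ℝ),(1:ℝ),(0:ℝ),(0:ℝ)))) =
      fun _ => Gfun α k c₀ q := by
    funext t; simp [Gfun, Lfun, coord2]
  rw [h]; exact hasDerivAt_const 0 _

lemma G_e3 (hα : α ≠ 0) (hk : k ≠ 0) (hS : 0 < 4 * q.1 ^ 2 + q.2.2.2 ^ 2 / k ^ 2)
    (hv : q.2.2.2 ≠ 0) :
    fderiv ℝ (Gfun α k c₀) q ((0:ℝ), (0:ℝ), (1:ℝ), (0:ℝ)) =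
      Real.cos (Real.sqrt (2 * c₀) * (k ^ 2 * Real.exp (Lfun α k q / (α * k ^ 2))) * q.2.2.1 /
        (2 * α * k ^ 2 * q.2.2.2)) *
      (Real.sqrt (2 * c₀) * (k ^ 2 * Real.exp (Lfun α k q / (α * k ^ 2))) /
        (2 * α * k ^ 2 * q.2.2.2)) := by
  apply fderiv_dir (G_diff hα hk hS hv)
  have h : (fun t : ℝ => Gfun α k c₀ (q + t • ((0:ℝ),(0:ℝ),(1:ℝ),(0:ℝ)))) =
      fun t => Real.sin (Real.sqrt (2 * c₀) * (k ^ 2 * Real.exp (Lfun α k q / (α * k ^ 2))) *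
        (q.2.2.1 + t) / (2 * α * k ^ 2 * q.2.2.2)) := by
    funext t; simp [Gfun, Lfun, coord3]
  rw [h]
  have h1 : HasDerivAt (fun t : ℝ => q.2.2.1 + t) 1 0 := by
    simpa using (hasDerivAt_id (0:ℝ)).const_add q.2.2.1
  have h2 := ((h1.const_mul
      (Real.sqrt (2 * c₀) * (k ^ 2 * Real.exp (Lfun α k q / (α * k ^ 2))))).div_const
      (2 * α * k ^ 2 * q.2.2.2)).sin
  convert h2 using 1
  norm_num

lemma H_diff (hα : α ≠ 0) (hk : k ≠ 0) (hv : q.2.2.2 ≠ 0) :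
    DifferentiableAt ℝ (Hfun α k c₀) q := by
  have hden : (fun p : Phase4 => 2 * α * k ^ 2 * p.2.2.2) q ≠ 0 := by
    show 2 * α * k ^ 2 * q.2.2.2 ≠ 0; positivity
  have hnum : DifferentiableAt ℝ (fun p : Phase4 =>
      Real.sqrt (2 * c₀) * (k ^ 2 * (4 * p.1 ^ 2 + p.2.2.2 ^ 2 / k ^ 2)) * p.2.2.1) q := by
    fun_prop
  have hd : DifferentiableAt ℝ (fun p : Phase4 => 2 * α * k ^ 2 * p.2.2.2) q := by fun_prop
  have hq : DifferentiableAt ℝ (fun p : Phase4 =>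
      Real.sqrt (2 * c₀) * (k ^ 2 * (4 * p.1 ^ 2 + p.2.2.2 ^ 2 / k ^ 2)) * p.2.2.1 /
        (2 * α * k ^ 2 * p.2.2.2)) q := by
    simp only [div_eq_mul_inv]
    exact hnum.mul (hd.inv hden)
  exact hq.cos.const_mul _

lemma H_e2 (hα : α ≠ 0) (hk : k ≠ 0) (hv : q.2.2.2 ≠ 0) :
    fderiv ℝ (Hfun α k c₀) q ((0:ℝ), (1:ℝ), (0:ℝ), (0:ℝ)) = 0 := by
  apply fderiv_dir (H_diff hα hk hv)
  have h : (fun t : ℝ => Hfun α k c₀ (q + t • ((0:ℝ),(1:ℝ),(0:ℝ),(0:ℝ)))) =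
      fun _ => Hfun α k c₀ q := by
    funext t; simp [Hfun, coord2]
  rw [h]; exact hasDerivAt_const 0 _

lemma H_e3 (hα : α ≠ 0) (hk : k ≠ 0) (hv : q.2.2.2 ≠ 0) :
    fderiv ℝ (Hfun α k c₀) q ((0:ℝ), (0:ℝ), (1:ℝ), (0:ℝ)) =
      Real.sqrt (2 * c₀) * (-Real.sin (Real.sqrt (2 * c₀) *
        (k ^ 2 * (4 * q.1 ^ 2 + q.2.2.2 ^ 2 / k ^ 2)) * q.2.2.1 / (2 * α * k ^ 2 * q.2.2.2)) *
      (Real.sqrt (2 * c₀) * (k ^ 2 * (4 * q.1 ^ 2 + q.2.2.2 ^ 2 / k ^ 2)) /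
        (2 * α * k ^ 2 * q.2.2.2))) := by
  apply fderiv_dir (H_diff hα hk hv)
  have h : (fun t : ℝ => Hfun α k c₀ (q + t • ((0:ℝ),(0:ℝ),(1:ℝ),(0:ℝ)))) =
      fun t => Real.sqrt (2 * c₀) * Real.cos (Real.sqrt (2 * c₀) *
        (k ^ 2 * (4 * q.1 ^ 2 + q.2.2.2 ^ 2 / k ^ 2)) * (q.2.2.1 + t) /
        (2 * α * k ^ 2 * q.2.2.2)) := by
    funext t; simp [Hfun, coord3]
  rw [h]
  have h1 : HasDerivAt (fun t : ℝ => q.2.2.1 + t) 1 0 := by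
    simpa using (hasDerivAt_id (0:ℝ)).const_add q.2.2.1
  have h2 := (((h1.const_mul
      (Real.sqrt (2 * c₀) * (k ^ 2 * (4 * q.1 ^ 2 + q.2.2.2 ^ 2 / k ^ 2)))).div_const
      (2 * α * k ^ 2 * q.2.2.2)).cos).const_mul (Real.sqrt (2 * c₀))
  exact h2.congr_deriv (by norm_num)

end derivs

lemma exp_L {α k : ℝ} {q : Phase4} (hα : α ≠ 0) (hk : k ≠ 0)
    (hS : 0 < 4 * q.1 ^ 2 + q.2.2.2 ^ 2 / k ^ 2) :
    Real.exp (Lfun α k q / (α * k ^ 2)) = 4 * q.1 ^ 2 + q.2.2.2 ^ 2 / k ^ 2 := by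
  have h : Lfun α k q / (α * k ^ 2) =
      Real.log (4 * q.1 ^ 2 + q.2.2.2 ^ 2 / k ^ 2) := by
    unfold Lfun
    field_simp
  rw [h, Real.exp_log hS]

lemma key {α k c₀ : ℝ} {q : Phase4} (hα : α ≠ 0) (hk : k ≠ 0)
    (hS : 0 < 4 * q.1 ^ 2 + q.2.2.2 ^ 2 / k ^ 2) (hv : q.2.2.2 ≠ 0) :
    XLop (Lfun α k) (Gfun α k c₀) q = Hfun α k c₀ q := by
  unfold XLop
  rw [L_e2 hS, L_e3 hS, G_e2 hα hk hS hv, G_e3 hα hk hS hv, L_e4 hS,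
    exp_L hα hk hS]
  unfold Hfun
  have hSne : (4 * q.1 ^ 2 + q.2.2.2 ^ 2 / k ^ 2) ≠ 0 := hS.ne'
  field_simp
  ring

theorem stmt10 (α k c₀ : ℝ) (hα : α = 1 / (8 * Real.pi)) (hk : 0 < k) (hc₀ : 0 < c₀)
    (L : Phase4 → ℝ)
    (hL : ∀ p : Phase4, L p = α * k ^ 2 * Real.log (4 * p.1 ^ 2 + p.2.2.2 ^ 2 / k ^ 2))
    (Q₂ : Phase4 → ℝ) (hQ₂ : ∀ p, Q₂ p = k ^ 2 * Real.exp (L p / (α * k ^ 2)))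
    (G : Phase4 → ℝ)
    (hG : ∀ p : Phase4,
      G p = Real.sin (Real.sqrt (2 * c₀) * Q₂ p * p.2.2.1 / (2 * α * k ^ 2 * p.2.2.2))) :
    ∀ p : Phase4, 4 * p.1 ^ 2 + p.2.2.2 ^ 2 / k ^ 2 > 0 → p.2.2.2 ≠ 0 →
      XLop L (XLop L G) p = -2 * c₀ * G p := by
  have hπ : 0 < Real.pi := Real.pi_pos
  have hα0 : 0 < α := by rw [hα]; positivity
  have hαne : α ≠ 0 := ne_of_gt hα0
  have hkne : k ≠ 0 := ne_of_gt hk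
  have hLe : L = Lfun α k := funext hL
  subst hLe
  have hGe : G = Gfun α k c₀ := by
    funext p
    rw [hG p, hQ₂ p]
    rfl
  subst hGe
  intro p hS hv
  have hU : IsOpen {q : Phase4 | 0 < 4 * q.1 ^ 2 + q.2.2.2 ^ 2 / k ^ 2 ∧ q.2.2.2 ≠ 0} := by
    have hcS : Continuous (fun q : Phase4 => 4 * q.1 ^ 2 + q.2.2.2 ^ 2 / k ^ 2) := by fun_prop
    have hcv : Continuous (fun q : Phase4 => q.2.2.2) := by fun_prop
    exact (isOpen_lt continuous_const hcS).inter (isOpen_ne_fun hcv continuous_const)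
  have hev : XLop (Lfun α k) (Gfun α k c₀) =ᶠ[nhds p] Hfun α k c₀ :=
    Filter.eventuallyEq_of_mem (hU.mem_nhds ⟨hS, hv⟩) (fun q hq => key hαne hkne hq.1 hq.2)
  have hfd : fderiv ℝ (XLop (Lfun α k) (Gfun α k c₀)) p = fderiv ℝ (Hfun α k c₀) p :=
    hev.fderiv_eq
  have step : XLop (Lfun α k) (XLop (Lfun α k) (Gfun α k c₀)) p =
      XLop (Lfun α k) (Hfun α k c₀) p := by
    show fderiv ℝ (XLop (Lfun α k) (Gfun α k c₀)) p (1, 0, 0, 0) *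
        fderiv ℝ (Lfun α k) p (0, 1, 0, 0) -
      fderiv ℝ (XLop (Lfun α k) (Gfun α k c₀)) p (0, 1, 0, 0) *
        fderiv ℝ (Lfun α k) p (1, 0, 0, 0) +
      fderiv ℝ (XLop (Lfun α k) (Gfun α k c₀)) p (0, 0, 1, 0) *
        fderiv ℝ (Lfun α k) p (0, 0, 0, 1) -
      fderiv ℝ (XLop (Lfun α k) (Gfun α k c₀)) p (0, 0, 0, 1) *
        fderiv ℝ (Lfun α k) p (0, 0, 1, 0) = _
    rw [hfd]
    rfl
  rw [step]
  unfold XLop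
  rw [L_e2 hS, L_e3 hS, H_e2 hαne hkne hv, H_e3 hαne hkne hv, L_e4 hS]
  unfold Gfun
  rw [exp_L hαne hkne hS]
  have hsq : Real.sqrt (2 * c₀) * Real.sqrt (2 * c₀) = 2 * c₀ :=
    Real.mul_self_sqrt (by positivity)
  have hSne : (4 * p.1 ^ 2 + p.2.2.2 ^ 2 / k ^ 2) ≠ 0 := hS.ne'
  set s := Real.sin (Real.sqrt (2 * c₀) *
    (k ^ 2 * (4 * p.1 ^ 2 + p.2.2.2 ^ 2 / k ^ 2)) * p.2.2.1 / (2 * α * k ^ 2 * p.2.2.2)) with hs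
  field_simp
  ring_nf
  rw [Real.sq_sqrt (by positivity : (0:ℝ) ≤ c₀ * 2)]
  ring
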